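/- Let E : M_d(ℂ) → M_d(ℂ) be a hermiticity-preserving linear map. With Π_s = (𝟙_{d²} + S)/(d(d+1)) the maximally mixed state on the symmetric subspace and E_a = (𝟙_{d²} − S)/2 the projector onto the antisymmetric subspace of ℂ^d ⊗ ℂ^d, one has the identity Tr[E_a · (E⊗E)(Π_s)] = ((d−1)/(2d)) · ( S(E)² − u(E) − ‖𝓔_n‖²/(d−1) + ‖𝓔_sdl‖²/(d+1) ). -/

import Mathlib

open Matrix Kronecker ComplexOrder MeasureTheory
open scoped ComplexConjugate

/-- `d×d` complex matrices. -/
abbrev Mat (d : ℕ) := Matrix (Fin d) (Fin d) ℂ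

/-- Matrices on `ℂ^d ⊗ ℂ^d`. -/
abbrev Mat2 (d : ℕ) := Matrix (Fin d × Fin d) (Fin d × Fin d) ℂ

noncomputable instance matMeasurableSpace {m n : Type*} : MeasurableSpace (Matrix m n ℂ) :=
  borel _

variable {d : ℕ}

/-- Liouville representation of a linear map in the basis `A`:
`𝓔_{kl} = Tr((A k)† E (A l))`. -/
noncomputable def Liou (A : Fin (d ^ 2) → Mat d) (E : Mat d →ₗ[ℂ] Mat d) :
    Matrix (Fin (d ^ 2)) (Fin (d ^ 2)) ℂ :=
  Matrix.of fun k l => Matrix.trace ((A k)ᴴ * E (A l))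

/-- The unitarity `u(E) = Tr(𝓔ᵤ† 𝓔ᵤ)/(d²-1)`, where `𝓔ᵤ` is the lower-right
`(d²-1)×(d²-1)` (unital) block of the Liouville representation. -/
noncomputable def unitarity (A : Fin (d ^ 2) → Mat d) (E : Mat d →ₗ[ℂ] Mat d) : ℝ :=
  (∑ k ∈ Finset.univ.filter (fun k : Fin (d ^ 2) => (k : ℕ) ≠ 0),
    ∑ l ∈ Finset.univ.filter (fun l : Fin (d ^ 2) => (l : ℕ) ≠ 0),
      ‖Liou A E k l‖ ^ 2) / ((d : ℝ) ^ 2 - 1)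

/-- `‖𝓔ₙ‖²`: squared Frobenius norm of the nonunital (bottom-left) column block. -/
noncomputable def nSq (A : Fin (d ^ 2) → Mat d) (E : Mat d →ₗ[ℂ] Mat d) : ℝ :=
  ∑ k ∈ Finset.univ.filter (fun k : Fin (d ^ 2) => (k : ℕ) ≠ 0),
    ∑ l ∈ Finset.univ.filter (fun l : Fin (d ^ 2) => (l : ℕ) = 0),
      ‖Liou A E k l‖ ^ 2

/-- `‖𝓔_sdl‖²`: squared Frobenius norm of the state-dependent-leakage (top-right) row block. -/
noncomputable def sdlSq (A : Fin (d ^ 2) → Mat d) (E : Mat d →ₗ[ℂ] Mat d) : ℝ :=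
  ∑ k ∈ Finset.univ.filter (fun k : Fin (d ^ 2) => (k : ℕ) = 0),
    ∑ l ∈ Finset.univ.filter (fun l : Fin (d ^ 2) => (l : ℕ) ≠ 0),
      ‖Liou A E k l‖ ^ 2

/-- The average survival rate `S(E) = Tr(E(𝟙))/d` (real part). -/
noncomputable def survival (d : ℕ) (E : Mat d →ₗ[ℂ] Mat d) : ℝ :=
  (Matrix.trace (E 1)).re / d

/-- The swap operator `S` on `ℂ^d ⊗ ℂ^d`, `S(x⊗y) = y⊗x`. -/
def swap (d : ℕ) : Mat2 d :=
  Matrix.of fun p q => if p.1 = q.2 ∧ p.2 = q.1 then 1 else 0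

/-- The Choi matrix `∑_{j,k} E(|j⟩⟨k|) ⊗ |j⟩⟨k|`. -/
noncomputable def choi (E : Mat d →ₗ[ℂ] Mat d) : Mat2 d :=
  Matrix.of fun p q => E (Matrix.single p.2 q.2 1) p.1 q.1

/-- Complete positivity: the Choi matrix is positive semidefinite. -/
def IsCP (E : Mat d →ₗ[ℂ] Mat d) : Prop := (choi E).PosSemidef

/-- Trace preserving. -/
def IsTP (E : Mat d →ₗ[ℂ] Mat d) : Prop := ∀ X : Mat d, (E X).trace = X.trace

/-- Trace nonincreasing on positive semidefinite inputs (with the complex order). -/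
def IsTNI (E : Mat d →ₗ[ℂ] Mat d) : Prop :=
  ∀ ρ : Mat d, ρ.PosSemidef → (E ρ).trace ≤ ρ.trace

/-- Hermiticity preserving. -/
def IsHermPreserving (E : Mat d →ₗ[ℂ] Mat d) : Prop := ∀ X : Mat d, E Xᴴ = (E X)ᴴ

/-- The induced map `E ⊗ F` on `M_{d²}(ℂ) = M_d(ℂ) ⊗ M_d(ℂ)`; it is the unique
linear map satisfying `(E ⊗ F)(A ⊗ₖ B) = E(A) ⊗ₖ F(B)`. -/
noncomputable def tensorMap (E F : Mat d →ₗ[ℂ] Mat d) : Mat2 d →ₗ[ℂ] Mat2 d where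
  toFun X := Matrix.of fun p q =>
    ∑ i : Fin d, ∑ j : Fin d, ∑ k : Fin d, ∑ l : Fin d,
      X (i, k) (j, l) *
        (E (Matrix.single i j 1) p.1 q.1 * F (Matrix.single k l 1) p.2 q.2)
  map_add' X Y := by
    ext p q
    simp [Matrix.add_apply, add_mul, Finset.sum_add_distrib]
  map_smul' c X := by
    ext p q
    simp [Matrix.smul_apply, Finset.mul_sum, smul_eq_mul, mul_assoc]

/-- Conjugation `ρ ↦ U ρ Uᴴ` as a linear map. -/
noncomputable def conjMap (U : Mat d) : Mat d →ₗ[ℂ] Mat d :=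
  LinearMap.mulLeft ℂ U ∘ₗ LinearMap.mulRight ℂ Uᴴ

/-- `B₁ = 𝟙_{d²}/d`. -/
noncomputable def B1 (d : ℕ) : Mat2 d := ((d : ℂ))⁻¹ • 1

/-- `B₂ = (S - 𝟙_{d²}/d)/√(d²-1)`. -/
noncomputable def B2 (d : ℕ) : Mat2 d :=
  ((Real.sqrt ((d : ℝ) ^ 2 - 1) : ℂ))⁻¹ • (swap d - ((d : ℂ))⁻¹ • 1)

/-- The 2×2 matrix `M(E)` with entries `M_{ij} = Tr[Bᵢ† (E⊗E)(Bⱼ)]`. -/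
noncomputable def Mmat (E : Mat d →ₗ[ℂ] Mat d) : Matrix (Fin 2) (Fin 2) ℂ :=
  Matrix.of fun i j =>
    Matrix.trace ((![B1 d, B2 d] i)ᴴ * tensorMap E E (![B1 d, B2 d] j))

/-- Auxiliary: interleave noise `E` and unitary conjugations along a list. -/
noncomputable def seqAux (E : Mat d →ₗ[ℂ] Mat d) : List (Mat d) → Mat d → Mat d
  | [], σ => σ
  | U :: rest, σ => seqAux E rest (U * E σ * Uᴴ)

/-- The output state `(𝓤_{j_m} ∘ E ∘ 𝓤_{j_{m-1}} ∘ E ∘ ⋯ ∘ E ∘ 𝓤_{j_1})(ρ)` for the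
sequence of unitaries given by the list (head applied first). -/
noncomputable def seqState (E : Mat d →ₗ[ℂ] Mat d) : List (Mat d) → Mat d → Mat d
  | [], ρ => ρ
  | U :: rest, ρ => seqAux E rest (U * ρ * Uᴴ)

lemma completeness {d : ℕ} (A : Fin (d ^ 2) → Mat d)
    (horth : ∀ k l : Fin (d ^ 2), Matrix.trace ((A k)ᴴ * A l) = if k = l then 1 else 0)
    (a b c e : Fin d) :
    (∑ k, conj (A k a b) * A k c e) = if a = c ∧ b = e then 1 else 0 := by
  classical
  set eqv : Fin d × Fin d ≃ Fin (d ^ 2) :=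
    finProdFinEquiv.trans (finCongr (pow_two d).symm) with heqv
  set V : Matrix (Fin (d ^ 2)) (Fin (d ^ 2)) ℂ :=
    Matrix.of (fun k m => A k (eqv.symm m).1 (eqv.symm m).2) with hV
  have h1 : V * Vᴴ = 1 := by
    ext k l
    have hkl := horth k l
    rw [Matrix.trace] at hkl
    simp only [Matrix.diag_apply, Matrix.mul_apply, Matrix.conjTranspose_apply] at hkl
    simp only [Matrix.mul_apply, Matrix.conjTranspose_apply, Matrix.one_apply,
      RCLike.star_def]
    have h2 : ∑ m, V k m * conj (V l m) = ∑ p : Fin d × Fin d, A k p.1 p.2 * conj (A l p.1 p.2) := by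
      rw [← Equiv.sum_comp eqv (fun m => V k m * conj (V l m))]
      simp [hV]
    rw [h2]
    have h3 : ∑ p : Fin d × Fin d, A k p.1 p.2 * conj (A l p.1 p.2)
        = conj (∑ j, ∑ i, star (A k i j) * A l i j) := by
      rw [Fintype.sum_prod_type]
      push_cast [map_sum]
      rw [Finset.sum_comm]
      congr 1; ext i; congr 1; ext j
      simp [mul_comm, RCLike.star_def]
    rw [h3, hkl]
    split <;> simp
  have h2 : Vᴴ * V = 1 := mul_eq_one_comm.mp h1
  have h3 : (Vᴴ * V) (eqv (a,b)) (eqv (c,e)) = (1 : Matrix (Fin (d^2)) (Fin (d^2)) ℂ) (eqv (a,b)) (eqv (c,e)) := by rw [h2]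
  simp only [Matrix.mul_apply, Matrix.conjTranspose_apply, Matrix.one_apply, RCLike.star_def,
    hV, Matrix.of_apply, Equiv.symm_apply_apply, Equiv.apply_eq_iff_eq, Prod.mk.injEq] at h3
  rw [h3]

lemma sesq_sum₁ {d : ℕ} {ι : Type*} (B : Mat d → Mat d → ℂ)
    (hadd1 : ∀ X X' Y, B (X + X') Y = B X Y + B X' Y)
    (hs1 : ∀ (c : ℂ) X Y, B (c • X) Y = conj c * B X Y)
    (s : Finset ι) (f : ι → Mat d) (Y : Mat d) :
    B (∑ i ∈ s, f i) Y = ∑ i ∈ s, B (f i) Y := by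
  classical
  have h0 : B 0 Y = 0 := by
    have := hs1 0 0 Y; simpa using this
  induction s using Finset.cons_induction with
  | empty => simpa
  | cons a s ha ih => rw [Finset.sum_cons, hadd1, ih, Finset.sum_cons]

lemma sesq_sum₂ {d : ℕ} {ι : Type*} (B : Mat d → Mat d → ℂ)
    (hadd2 : ∀ X Y Y', B X (Y + Y') = B X Y + B X Y')
    (hs2 : ∀ (c : ℂ) X Y, B X (c • Y) = c * B X Y)
    (s : Finset ι) (X : Mat d) (f : ι → Mat d) :
    B X (∑ i ∈ s, f i) = ∑ i ∈ s, B X (f i) := by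
  classical
  have h0 : B X 0 = 0 := by
    have := hs2 0 X 0; simpa using this
  induction s using Finset.cons_induction with
  | empty => simpa
  | cons a s ha ih => rw [Finset.sum_cons, hadd2, ih, Finset.sum_cons]

lemma mat_eq_sum_prod {d : ℕ} (M : Mat d) :
    M = ∑ p : Fin d × Fin d, M p.1 p.2 • Matrix.single p.1 p.2 1 := by
  conv_lhs => rw [matrix_eq_sum_single M]
  rw [← Fintype.sum_prod_type']
  refine Finset.sum_congr rfl fun p _ => ?_
  ext a b
  simp [Matrix.single, Matrix.of_apply, mul_ite, mul_one, mul_zero]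

lemma trace_std {d : ℕ} (a b : Fin d) (M : Mat d) :
    Matrix.trace ((Matrix.single a b (1:ℂ))ᴴ * M) = M a b := by
  simp [Matrix.trace, Matrix.diag, Matrix.mul_apply, Matrix.conjTranspose_apply,
    Matrix.single, Matrix.of_apply, ite_and, apply_ite (starRingEnd ℂ),
    Finset.sum_ite_eq, Finset.sum_ite_eq']

lemma one_eq_sum {d : ℕ} : (1 : Mat d) = ∑ i, Matrix.single i i (1:ℂ) := by
  ext a b
  simp [Matrix.sum_apply, Matrix.single, Matrix.one_apply, ite_and,
    Finset.sum_ite_eq, eq_comm]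

lemma trace_mul_conjT {d : ℕ} (M N : Mat d) :
    Matrix.trace (M * Nᴴ) = ∑ a, ∑ b, M a b * conj (N a b) := by
  simp [Matrix.trace, Matrix.diag, Matrix.mul_apply, Matrix.conjTranspose_apply, RCLike.star_def]

lemma std_conjT {d : ℕ} (i j : Fin d) :
    (Matrix.single i j (1:ℂ))ᴴ = Matrix.single j i 1 := by
  ext a b
  simp [Matrix.conjTranspose_apply, Matrix.single, Matrix.of_apply, and_comm]

lemma parseval_sesq {d : ℕ} (A : Fin (d ^ 2) → Mat d)
    (horth : ∀ k l : Fin (d ^ 2), Matrix.trace ((A k)ᴴ * A l) = if k = l then 1 else 0)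
    (B : Mat d → Mat d → ℂ)
    (hadd1 : ∀ X X' Y, B (X + X') Y = B X Y + B X' Y)
    (hadd2 : ∀ X Y Y', B X (Y + Y') = B X Y + B X Y')
    (hs1 : ∀ (c : ℂ) X Y, B (c • X) Y = conj c * B X Y)
    (hs2 : ∀ (c : ℂ) X Y, B X (c • Y) = c * B X Y) :
    ∑ k, B (A k) (A k)
      = ∑ i, ∑ j, B (Matrix.single i j 1) (Matrix.single i j 1) := by
  classical
  have hBA : ∀ k, B (A k) (A k) = ∑ p : Fin d × Fin d, ∑ q : Fin d × Fin d,
      conj (A k p.1 p.2) * A k q.1 q.2 *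
        B (Matrix.single p.1 p.2 1) (Matrix.single q.1 q.2 1) := by
    intro k
    conv_lhs => rw [mat_eq_sum_prod (A k)]
    rw [sesq_sum₁ B hadd1 hs1]
    refine Finset.sum_congr rfl fun p _ => ?_
    rw [hs1, sesq_sum₂ B hadd2 hs2, Finset.mul_sum]
    refine Finset.sum_congr rfl fun q _ => ?_
    rw [hs2]; ring
  calc ∑ k, B (A k) (A k)
      = ∑ p : Fin d × Fin d, ∑ q : Fin d × Fin d,
          (∑ k, conj (A k p.1 p.2) * A k q.1 q.2) *
            B (Matrix.single p.1 p.2 1) (Matrix.single q.1 q.2 1) := by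
        simp_rw [hBA]
        rw [Finset.sum_comm]
        refine Finset.sum_congr rfl fun p _ => ?_
        rw [Finset.sum_comm]
        refine Finset.sum_congr rfl fun q _ => ?_
        rw [Finset.sum_mul]
    _ = ∑ p : Fin d × Fin d, B (Matrix.single p.1 p.2 1) (Matrix.single p.1 p.2 1) := by
        refine Finset.sum_congr rfl fun p _ => ?_
        rw [Finset.sum_congr rfl (fun q _ => by
          rw [completeness A horth p.1 p.2 q.1 q.2])]
        simp only [ite_mul, one_mul, zero_mul, ← Prod.ext_iff]
        simp [Finset.sum_ite_eq]
    _ = ∑ i, ∑ j, B (Matrix.single i j 1) (Matrix.single i j 1) := by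
        rw [Fintype.sum_prod_type]

lemma trace_tensor {d : ℕ} (E : Mat d →ₗ[ℂ] Mat d) (X : Mat2 d) :
    Matrix.trace (tensorMap E E X)
      = ∑ i, ∑ j, ∑ k, ∑ l, X (i, k) (j, l) *
          (Matrix.trace (E (Matrix.single i j 1)) * Matrix.trace (E (Matrix.single k l 1))) := by
  classical
  simp only [Matrix.trace, Matrix.diag, tensorMap, LinearMap.coe_mk, AddHom.coe_mk,
    Matrix.of_apply]
  rw [Finset.sum_comm]
  refine Finset.sum_congr rfl fun i _ => ?_
  rw [Finset.sum_comm]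
  refine Finset.sum_congr rfl fun j _ => ?_
  rw [Finset.sum_comm]
  refine Finset.sum_congr rfl fun k _ => ?_
  rw [Finset.sum_comm]
  refine Finset.sum_congr rfl fun l _ => ?_
  rw [← Finset.mul_sum]
  congr 1
  rw [Fintype.sum_prod_type]
  simp only []
  rw [← Fintype.sum_mul_sum]

lemma trace_swap_mul {d : ℕ} (M : Mat2 d) :
    Matrix.trace (swap d * M) = ∑ p : Fin d × Fin d, M (p.2, p.1) p := by
  simp only [Matrix.trace, Matrix.diag, Matrix.mul_apply, _root_.swap, Matrix.of_apply]
  refine Finset.sum_congr rfl fun p _ => ?_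
  rw [Fintype.sum_prod_type]
  simp [ite_and, Finset.sum_ite_eq, Finset.sum_ite_eq']

lemma trace_swap_tensor {d : ℕ} (E : Mat d →ₗ[ℂ] Mat d) (X : Mat2 d) :
    Matrix.trace (swap d * tensorMap E E X)
      = ∑ i, ∑ j, ∑ k, ∑ l, X (i, k) (j, l) *
          Matrix.trace (E (Matrix.single i j 1) * E (Matrix.single k l 1)) := by
  classical
  rw [trace_swap_mul]
  simp only [tensorMap, LinearMap.coe_mk, AddHom.coe_mk, Matrix.of_apply]
  rw [Finset.sum_comm]
  refine Finset.sum_congr rfl fun i _ => ?_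
  rw [Finset.sum_comm]
  refine Finset.sum_congr rfl fun j _ => ?_
  rw [Finset.sum_comm]
  refine Finset.sum_congr rfl fun k _ => ?_
  rw [Finset.sum_comm]
  refine Finset.sum_congr rfl fun l _ => ?_
  rw [← Finset.mul_sum]
  congr 1
  rw [Matrix.trace]
  simp only [Matrix.diag, Matrix.mul_apply]
  rw [Fintype.sum_prod_type, Finset.sum_comm]

lemma herm_std {d : ℕ} (E : Mat d →ₗ[ℂ] Mat d) (hE : ∀ X : Mat d, E Xᴴ = (E X)ᴴ)
    (i j : Fin d) : E (Matrix.single j i 1) = (E (Matrix.single i j 1))ᴴ := by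
  rw [← std_conjT, hE]

lemma E_one_sum {d : ℕ} (E : Mat d →ₗ[ℂ] Mat d) :
    E 1 = ∑ i, E (Matrix.single i i 1) := by
  conv_lhs => rw [one_eq_sum]
  rw [map_sum]

lemma tr_T_one {d : ℕ} (E : Mat d →ₗ[ℂ] Mat d) :
    Matrix.trace (tensorMap E E 1) = Matrix.trace (E 1) * Matrix.trace (E 1) := by
  classical
  rw [trace_tensor]
  have h1 : Matrix.trace (E 1) = ∑ i, Matrix.trace (E (Matrix.single i i 1)) := by
    rw [E_one_sum, trace_sum]
  rw [h1, Fintype.sum_mul_sum]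
  simp [Matrix.one_apply, Prod.mk.injEq, ite_and, Finset.sum_ite_eq, Finset.sum_ite_eq']

lemma tr_T_swap {d : ℕ} (E : Mat d →ₗ[ℂ] Mat d) (hE : ∀ X : Mat d, E Xᴴ = (E X)ᴴ) :
    Matrix.trace (tensorMap E E (swap d))
      = ∑ i, ∑ k, Matrix.trace (E (Matrix.single i k 1))
          * conj (Matrix.trace (E (Matrix.single i k 1))) := by
  classical
  rw [trace_tensor]
  simp only [_root_.swap, Matrix.of_apply, ite_and, ite_mul, one_mul, zero_mul,
    Finset.sum_ite_eq, Finset.sum_ite_eq', Finset.mem_univ, if_true]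
  refine Finset.sum_congr rfl fun i _ => Finset.sum_congr rfl fun k _ => ?_
  rw [herm_std E hE i k, Matrix.trace_conjTranspose]
  rfl

lemma tr_S_T_one {d : ℕ} (E : Mat d →ₗ[ℂ] Mat d) (hE : ∀ X : Mat d, E Xᴴ = (E X)ᴴ) :
    Matrix.trace (swap d * tensorMap E E 1)
      = ∑ a, ∑ b, (E 1) a b * conj ((E 1) a b) := by
  classical
  rw [trace_swap_tensor]
  have h2 : ∑ i, ∑ j, ∑ k, ∑ l, (1 : Mat2 d) (i, k) (j, l) *
        Matrix.trace (E (Matrix.single i j 1) * E (Matrix.single k l 1))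
      = Matrix.trace (E 1 * E 1) := by
    rw [E_one_sum, Matrix.sum_mul, trace_sum]
    simp only [Matrix.mul_sum, trace_sum]
    simp [Matrix.one_apply, Prod.mk.injEq, ite_and, Finset.sum_ite_eq, Finset.sum_ite_eq']
  rw [h2]
  have h3 : (E 1 : Mat d) = (E 1)ᴴ := by
    conv_lhs => rw [show (1 : Mat d) = 1ᴴ by simp]
    rw [hE]
  conv_lhs => rw [show (E 1) * (E 1) = (E 1) * (E 1)ᴴ by rw [← h3]]
  rw [trace_mul_conjT]

lemma tr_S_T_swap {d : ℕ} (E : Mat d →ₗ[ℂ] Mat d) (hE : ∀ X : Mat d, E Xᴴ = (E X)ᴴ) :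
    Matrix.trace (swap d * tensorMap E E (swap d))
      = ∑ i, ∑ k, ∑ a, ∑ b, (E (Matrix.single i k 1)) a b
          * conj ((E (Matrix.single i k 1)) a b) := by
  classical
  rw [trace_swap_tensor]
  simp only [_root_.swap, Matrix.of_apply, ite_and, ite_mul, one_mul, zero_mul,
    Finset.sum_ite_eq, Finset.sum_ite_eq', Finset.mem_univ, if_true]
  refine Finset.sum_congr rfl fun i _ => Finset.sum_congr rfl fun k _ => ?_
  rw [herm_std E hE i k, trace_mul_conjT]

lemma col_parseval {d : ℕ} (A : Fin (d ^ 2) → Mat d)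
    (horth : ∀ k l : Fin (d ^ 2), Matrix.trace ((A k)ᴴ * A l) = if k = l then 1 else 0)
    (M : Mat d) :
    ∑ k, Matrix.trace ((A k)ᴴ * M) * conj (Matrix.trace ((A k)ᴴ * M))
      = ∑ a, ∑ b, M a b * conj (M a b) := by
  have h := parseval_sesq A horth
    (fun X Y => Matrix.trace (Xᴴ * M) * conj (Matrix.trace (Yᴴ * M)))
    (by intro X X' Y; simp [Matrix.conjTranspose_add, Matrix.add_mul]; ring)
    (by intro X Y Y'; simp [Matrix.conjTranspose_add, Matrix.add_mul]; ring)
    (by intro c X Y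
        simp [Matrix.conjTranspose_smul, Matrix.smul_mul, smul_eq_mul, _root_.map_mul]; ring)
    (by intro c X Y
        simp [Matrix.conjTranspose_smul, Matrix.smul_mul, smul_eq_mul, _root_.map_mul]; ring)
  simpa only [trace_std] using h

lemma row_parseval {d : ℕ} (A : Fin (d ^ 2) → Mat d)
    (horth : ∀ k l : Fin (d ^ 2), Matrix.trace ((A k)ᴴ * A l) = if k = l then 1 else 0)
    (E : Mat d →ₗ[ℂ] Mat d) :
    ∑ l, Matrix.trace (E (A l)) * conj (Matrix.trace (E (A l)))
      = ∑ i, ∑ j, Matrix.trace (E (Matrix.single i j 1))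
          * conj (Matrix.trace (E (Matrix.single i j 1))) := by
  have h := parseval_sesq A horth
    (fun X Y => Matrix.trace (E Y) * conj (Matrix.trace (E X)))
    (by intro X X' Y; simp; ring)
    (by intro X Y Y'; simp; ring)
    (by intro c X Y; simp [smul_eq_mul, _root_.map_mul]; ring)
    (by intro c X Y; simp [smul_eq_mul, _root_.map_mul]; ring)
  simpa using h

lemma full_parseval {d : ℕ} (A : Fin (d ^ 2) → Mat d)
    (horth : ∀ k l : Fin (d ^ 2), Matrix.trace ((A k)ᴴ * A l) = if k = l then 1 else 0)
    (E : Mat d →ₗ[ℂ] Mat d) :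
    ∑ l, ∑ a, ∑ b, (E (A l)) a b * conj ((E (A l)) a b)
      = ∑ i, ∑ j, ∑ a, ∑ b, (E (Matrix.single i j 1)) a b
          * conj ((E (Matrix.single i j 1)) a b) := by
  have h := parseval_sesq A horth
    (fun X Y => ∑ a, ∑ b, (E Y) a b * conj ((E X) a b))
    (by intro X X' Y
        simp only [map_add, Matrix.add_apply, map_add, mul_add, Finset.sum_add_distrib])
    (by intro X Y Y'
        simp only [map_add, Matrix.add_apply, add_mul, Finset.sum_add_distrib])
    (by intro c X Y
        simp only [_root_.map_smul, Matrix.smul_apply, smul_eq_mul, _root_.map_mul,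
          Finset.mul_sum]
        refine Finset.sum_congr rfl fun a _ => Finset.sum_congr rfl fun b _ => ?_
        ring)
    (by intro c X Y
        simp only [_root_.map_smul, Matrix.smul_apply, smul_eq_mul, Finset.mul_sum]
        refine Finset.sum_congr rfl fun a _ => Finset.sum_congr rfl fun b _ => ?_
        ring)
  simpa using h


set_option maxHeartbeats 2000000 in
/-- For hermiticity-preserving `E`, with `Π_s = (𝟙 + S)/(d(d+1))` and
`E_a = (𝟙 − S)/2`:
`Tr[E_a (E⊗E)(Π_s)] = ((d−1)/(2d))(S(E)² − u(E) − ‖𝓔ₙ‖²/(d−1) + ‖𝓔_sdl‖²/(d+1))`. -/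
theorem statement_19 (d : ℕ) (hd : 2 ≤ d)
    (A : Fin (d ^ 2) → Mat d)
    (horth : ∀ k l : Fin (d ^ 2), Matrix.trace ((A k)ᴴ * A l) = if k = l then 1 else 0)
    (hspan : Submodule.span ℂ (Set.range A) = ⊤)
    (hA0 : ∀ k : Fin (d ^ 2), (k : ℕ) = 0 → A k = ((Real.sqrt d : ℝ) : ℂ)⁻¹ • 1)
    (E : Mat d →ₗ[ℂ] Mat d) (hE : IsHermPreserving E) :
    Matrix.trace (((2 : ℂ)⁻¹ • (1 - swap d)) *
        tensorMap E E (((d : ℂ) * ((d : ℂ) + 1))⁻¹ • (1 + swap d)))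
      = (((d : ℂ) - 1) / (2 * (d : ℂ))) *
          ((Matrix.trace (E 1) / (d : ℂ)) ^ 2 - ((unitarity A E : ℝ) : ℂ)
            - ((nSq A E : ℝ) : ℂ) / ((d : ℂ) - 1)
            + ((sdlSq A E : ℝ) : ℂ) / ((d : ℂ) + 1)) := by
  classical
  haveI : NeZero (d ^ 2) := ⟨pow_ne_zero 2 (by omega)⟩
  have hd0 : (d : ℂ) ≠ 0 := Nat.cast_ne_zero.mpr (by omega)
  have hdm1 : (d : ℂ) - 1 ≠ 0 := by
    intro h
    have : (d : ℂ) = ((1 : ℕ) : ℂ) := by push_cast; linear_combination h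
    have := Nat.cast_injective this
    omega
  have hdp1 : (d : ℂ) + 1 ≠ 0 := by
    intro h
    have : ((d + 1 : ℕ) : ℂ) = ((0 : ℕ) : ℂ) := by push_cast; linear_combination h
    have := Nat.cast_injective this
    omega
  have hd2m1 : (d : ℂ) ^ 2 - 1 ≠ 0 := by
    intro h
    apply hdm1
    have h2 : ((d : ℂ) - 1) * ((d : ℂ) + 1) = 0 := by linear_combination h
    rcases mul_eq_zero.mp h2 with h3 | h3
    · exact h3
    · exact absurd h3 hdp1
  -- abbreviations
  set P : ℂ := Matrix.trace (E 1) with hPdef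
  set R : ℂ := ∑ i, ∑ j, Matrix.trace (E (Matrix.single i j 1))
      * conj (Matrix.trace (E (Matrix.single i j 1))) with hRdef
  set C : ℂ := ∑ a, ∑ b, (E 1) a b * conj ((E 1) a b) with hCdef
  set F : ℂ := ∑ i, ∑ j, ∑ a, ∑ b, (E (Matrix.single i j 1)) a b
      * conj ((E (Matrix.single i j 1)) a b) with hFdef
  set L : Fin (d ^ 2) → Fin (d ^ 2) → ℂ := fun k l => Liou A E k l with hLdef
  have hLapp : ∀ k l, L k l = Matrix.trace ((A k)ᴴ * E (A l)) := fun k l => rfl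
  set Nr : ℂ := ∑ l ∈ Finset.univ.filter (fun l : Fin (d ^ 2) => (l : ℕ) ≠ 0),
      L 0 l * conj (L 0 l) with hNrdef
  set Nc : ℂ := ∑ k ∈ Finset.univ.filter (fun k : Fin (d ^ 2) => (k : ℕ) ≠ 0),
      L k 0 * conj (L k 0) with hNcdef
  set Uc : ℂ := ∑ k ∈ Finset.univ.filter (fun k : Fin (d ^ 2) => (k : ℕ) ≠ 0),
      ∑ l ∈ Finset.univ.filter (fun l : Fin (d ^ 2) => (l : ℕ) ≠ 0),
        L k l * conj (L k l) with hUcdef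
  -- the filter for index 0 is a singleton
  have hfilter0 : Finset.univ.filter (fun k : Fin (d ^ 2) => (k : ℕ) = 0) = {0} := by
    ext k
    simp only [Finset.mem_filter, Finset.mem_univ, true_and, Finset.mem_singleton, Fin.ext_iff, Fin.val_zero]
  have hsplit : ∀ f : Fin (d ^ 2) → ℂ,
      ∑ k, f k = f 0 + ∑ k ∈ Finset.univ.filter (fun k : Fin (d ^ 2) => (k : ℕ) ≠ 0), f k := by
    intro f
    rw [← Finset.sum_filter_add_sum_filter_not Finset.univ
      (fun k : Fin (d ^ 2) => (k : ℕ) = 0) f, hfilter0, Finset.sum_singleton]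
  -- basis element 0
  have hA0' : A 0 = (((Real.sqrt d : ℝ)) : ℂ)⁻¹ • 1 := hA0 0 (by simp)
  have hconjs : conj ((((Real.sqrt d : ℝ)) : ℂ)⁻¹) = (((Real.sqrt d : ℝ)) : ℂ)⁻¹ := by
    rw [map_inv₀, Complex.conj_ofReal]
  have hss : (((Real.sqrt d : ℝ)) : ℂ)⁻¹ * (((Real.sqrt d : ℝ)) : ℂ)⁻¹ = ((d : ℂ))⁻¹ := by
    rw [← mul_inv, ← Complex.ofReal_mul, Real.mul_self_sqrt (by positivity)]
    simp
  have hcdinv : conj ((d : ℂ))⁻¹ = ((d : ℂ))⁻¹ := by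
    rw [map_inv₀, Complex.conj_natCast]
  -- entries of the first row/column
  have hrow : ∀ l, L 0 l = (((Real.sqrt d : ℝ)) : ℂ)⁻¹ * Matrix.trace (E (A l)) := by
    intro l
    rw [hLapp, hA0', Matrix.conjTranspose_smul, Matrix.conjTranspose_one,
      Matrix.smul_mul, Matrix.one_mul, Matrix.trace_smul, smul_eq_mul]
    simp only [RCLike.star_def]
    rw [hconjs]
  have hcol : ∀ k, L k 0 = (((Real.sqrt d : ℝ)) : ℂ)⁻¹ * Matrix.trace ((A k)ᴴ * E 1) := by
    intro k
    rw [hLapp, hA0', _root_.map_smul, Matrix.mul_smul, Matrix.trace_smul, smul_eq_mul]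
  have hL00 : L 0 0 = ((d : ℂ))⁻¹ * P := by
    rw [hrow 0, hA0', _root_.map_smul, Matrix.trace_smul, smul_eq_mul, ← mul_assoc, hss]
  have hP : conj P = P := by
    have h3 : (E 1 : Mat d) = (E 1)ᴴ := by
      conv_lhs => rw [show (1 : Mat d) = (1 : Mat d)ᴴ by simp]
      rw [hE]
    calc conj P = Matrix.trace ((E 1)ᴴ) := (Matrix.trace_conjTranspose (E 1)).symm
    _ = P := by rw [← h3]
  -- row, column and full sums of |Liou|^2
  have Hrow : L 0 0 * conj (L 0 0) + Nr = ((d : ℂ))⁻¹ * R := by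
    have h1 : ∑ l, L 0 l * conj (L 0 l) = ((d : ℂ))⁻¹ * R := by
      have := row_parseval A horth E
      calc ∑ l, L 0 l * conj (L 0 l)
          = ∑ l, ((((Real.sqrt d : ℝ)) : ℂ)⁻¹ * (((Real.sqrt d : ℝ)) : ℂ)⁻¹)
              * (Matrix.trace (E (A l)) * conj (Matrix.trace (E (A l)))) := by
            refine Finset.sum_congr rfl fun l _ => ?_
            rw [hrow l, _root_.map_mul, hconjs]
            ring
        _ = ((d : ℂ))⁻¹ * R := by
            rw [← Finset.mul_sum, hss, this, hRdef]
    rw [← h1, hsplit (fun l => L 0 l * conj (L 0 l))]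
  have Hcol : L 0 0 * conj (L 0 0) + Nc = ((d : ℂ))⁻¹ * C := by
    have h1 : ∑ k, L k 0 * conj (L k 0) = ((d : ℂ))⁻¹ * C := by
      have := col_parseval A horth (E 1)
      calc ∑ k, L k 0 * conj (L k 0)
          = ∑ k, ((((Real.sqrt d : ℝ)) : ℂ)⁻¹ * (((Real.sqrt d : ℝ)) : ℂ)⁻¹)
              * (Matrix.trace ((A k)ᴴ * E 1) * conj (Matrix.trace ((A k)ᴴ * E 1))) := by
            refine Finset.sum_congr rfl fun k _ => ?_
            rw [hcol k, _root_.map_mul, hconjs]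
            ring
        _ = ((d : ℂ))⁻¹ * C := by
            rw [← Finset.mul_sum, hss, this, hCdef]
    rw [← h1, hsplit (fun k => L k 0 * conj (L k 0))]
  have Hfull : L 0 0 * conj (L 0 0) + Nr + Nc + Uc = F := by
    have h1 : ∀ l, ∑ k, L k l * conj (L k l)
        = ∑ a, ∑ b, (E (A l)) a b * conj ((E (A l)) a b) := by
      intro l
      exact col_parseval A horth (E (A l))
    have h2 : ∑ l, ∑ k, L k l * conj (L k l) = F := by
      rw [Finset.sum_congr rfl fun l _ => h1 l, full_parseval A horth E, hFdef]
    have h3 : ∑ l, ∑ k, L k l * conj (L k l) = ∑ k, ∑ l, L k l * conj (L k l) :=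
      Finset.sum_comm
    rw [h3] at h2
    rw [hsplit (fun k => ∑ l, L k l * conj (L k l))] at h2
    rw [hsplit (fun l => L 0 l * conj (L 0 l))] at h2
    have h4 : ∑ k ∈ Finset.univ.filter (fun k : Fin (d ^ 2) => (k : ℕ) ≠ 0),
        ∑ l, L k l * conj (L k l)
        = Nc + Uc := by
      rw [hNcdef, hUcdef, ← Finset.sum_add_distrib]
      refine Finset.sum_congr rfl fun k _ => ?_
      rw [hsplit (fun l => L k l * conj (L k l))]
    rw [h4] at h2
    linear_combination h2
  -- casts of the real quantities
  have hcast : ∀ z : ℂ, ((‖z‖ : ℝ) : ℂ) ^ 2 = z * conj z := by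
    intro z
    rw [← Complex.ofReal_pow, Complex.sq_norm, ← Complex.mul_conj]
  have hnSq : ((nSq A E : ℝ) : ℂ) = Nc := by
    rw [nSq, hfilter0]
    push_cast
    refine Finset.sum_congr rfl fun k _ => ?_
    rw [Finset.sum_singleton, hcast]
  have hsdlSq : ((sdlSq A E : ℝ) : ℂ) = Nr := by
    rw [sdlSq, hfilter0, Finset.sum_singleton]
    push_cast
    refine Finset.sum_congr rfl fun l _ => ?_
    rw [hcast]
  have hUnit : ((unitarity A E : ℝ) : ℂ) = Uc / ((d : ℂ) ^ 2 - 1) := by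
    rw [unitarity]
    push_cast
    congr 1
    refine Finset.sum_congr rfl fun k _ => Finset.sum_congr rfl fun l _ => ?_
    rw [hcast]
  -- the trace on the left-hand side
  have hLHS : Matrix.trace (((2 : ℂ)⁻¹ • (1 - swap d)) *
        tensorMap E E (((d : ℂ) * ((d : ℂ) + 1))⁻¹ • (1 + swap d)))
      = (2 : ℂ)⁻¹ * ((d : ℂ) * ((d : ℂ) + 1))⁻¹ *
          (Matrix.trace (tensorMap E E 1) + Matrix.trace (tensorMap E E (swap d))
            - Matrix.trace (swap d * tensorMap E E 1)
            - Matrix.trace (swap d * tensorMap E E (swap d))) := by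
    rw [_root_.map_smul, Matrix.smul_mul, Matrix.mul_smul, Matrix.trace_smul, Matrix.trace_smul,
      map_add, Matrix.sub_mul, Matrix.mul_add, Matrix.mul_add, Matrix.one_mul, Matrix.one_mul]
    rw [Matrix.trace_sub, Matrix.trace_add, Matrix.trace_add]
    simp only [smul_eq_mul]
    ring
  rw [hLHS, tr_T_one E, tr_T_swap E hE, tr_S_T_one E hE, tr_S_T_swap E hE,
    hUnit, hnSq, hsdlSq]
  rw [← hPdef, ← hRdef, ← hCdef, ← hFdef]
  rw [← Hfull]
  have hR : R = (d : ℂ) * (L 0 0 * conj (L 0 0) + Nr) := by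
    rw [Hrow]
    field_simp
  have hC : C = (d : ℂ) * (L 0 0 * conj (L 0 0) + Nc) := by
    rw [Hcol]
    field_simp
  rw [hR, hC, hL00]
  have hq : conj (((d : ℂ))⁻¹ * P) = ((d : ℂ))⁻¹ * P := by
    rw [_root_.map_mul, hcdinv, hP]
  rw [hq]
  field_simp
  ring
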